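/- arXiv:0812.4269 — 5 statements merged into one kernel-verified Lean document; each statement's English description precedes it below -/
import Mathlib

section
/- Let x be a point in the boundary of the closed Weyl chamber C̄ and let n be a unit inward normal vector to C at x (i.e., |n| = 1 and ⟨x − a, n⟩ ≤ 0 for all a ∈ C̄). Then there exists a simple root α ∈ S with ⟨x, α⟩ = 0 and ⟨n, α⟩ ≠ 0. -/
open scoped RealInnerProductSpace

/-- Lemma 2 / "Abass": If `x` lies on the boundary of the closed Weyl
chamber `C̄ = {y | ⟪α, y⟫ ≥ 0 ∀ α ∈ S}` and `n` is a unit inward normal vector to `C`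
at `x`, then there is a simple root `α ∈ S` with `⟪x, α⟫ = 0` and `⟪n, α⟫ ≠ 0`. -/
theorem exists_simple_root_nonorthogonal_to_normal
    {V : Type*} [NormedAddCommGroup V] [InnerProductSpace ℝ V] [FiniteDimensional ℝ V]
    (S : Finset V) (hS0 : ∀ α ∈ S, α ≠ (0 : V))
    (hCne : {y : V | ∀ α ∈ S, 0 < ⟪α, y⟫}.Nonempty)
    (x : V) (hx : ∀ α ∈ S, 0 ≤ ⟪α, x⟫)
    (hxbd : ∃ α₀ ∈ S, ⟪α₀, x⟫ = 0)
    (n : V) (hn1 : ‖n‖ = 1)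
    (hn : ∀ a : V, (∀ α ∈ S, 0 ≤ ⟪α, a⟫) → ⟪x - a, n⟫ ≤ 0) :
    ∃ α ∈ S, ⟪x, α⟫ = 0 ∧ ⟪n, α⟫ ≠ 0 := by
  by_contra h
  push_neg at h
  -- so for every α ∈ S with ⟪x, α⟫ = 0 we have ⟪n, α⟫ = 0
  set g : V → ℝ := fun α => if ⟪α, x⟫ = 0 then 1 else ⟪α, x⟫ / (1 + |⟪α, n⟫|) with hg
  set T : Finset ℝ := insert (1 : ℝ) (S.image g) with hT
  have hTne : T.Nonempty := ⟨1, Finset.mem_insert_self _ _⟩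
  set t : ℝ := T.min' hTne with ht
  have habs : ∀ α : V, (0:ℝ) < 1 + |⟪α, n⟫| := fun α => by positivity
  have htpos : 0 < t := by
    apply Finset.lt_min'_iff T hTne |>.mpr
    intro y hy
    rcases Finset.mem_insert.mp hy with rfl | hy
    · norm_num
    · rcases Finset.mem_image.mp hy with ⟨α, hα, rfl⟩
      simp only [hg]
      split
      · norm_num
      · rename_i hne
        have hpos : 0 < ⟪α, x⟫ := lt_of_le_of_ne (hx α hα) (Ne.symm hne)
        exact div_pos hpos (habs α)
  have hmem : ∀ β ∈ S, 0 ≤ ⟪β, x - t • n⟫ := by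
    intro β hβ
    rw [inner_sub_right, inner_smul_right, sub_nonneg]
    by_cases hz : ⟪β, x⟫ = 0
    · have : ⟪n, β⟫ = 0 := h β hβ (by rw [real_inner_comm]; exact hz)
      rw [real_inner_comm] at this
      rw [hz, this, mul_zero]
    · have hpos : 0 < ⟪β, x⟫ := lt_of_le_of_ne (hx β hβ) (Ne.symm hz)
      have htle : t ≤ ⟪β, x⟫ / (1 + |⟪β, n⟫|) := by
        apply Finset.min'_le
        refine Finset.mem_insert_of_mem (Finset.mem_image.mpr ⟨β, hβ, ?_⟩)
        simp [hg, hz]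
      calc t * ⟪β, n⟫ ≤ t * |⟪β, n⟫| := by
              exact mul_le_mul_of_nonneg_left (le_abs_self _) htpos.le
        _ ≤ (⟪β, x⟫ / (1 + |⟪β, n⟫|)) * |⟪β, n⟫| :=
              mul_le_mul_of_nonneg_right htle (abs_nonneg _)
        _ ≤ ⟪β, x⟫ := by
              rw [div_mul_eq_mul_div, div_le_iff₀ (habs β)]
              nlinarith [abs_nonneg (⟪β, n⟫), hpos]
  have := hn (x - t • n) hmem
  rw [sub_sub_cancel, inner_smul_left, real_inner_self_eq_norm_sq, hn1] at this
  simp at this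
  linarith [htpos, this]
end

section
/- Let g : D → ℝ be a convex differentiable function on an open convex subset D ⊆ ℝ^m. Then for every a ∈ D there exist constants b, c, d > 0 such that for all x ∈ D: ⟨∇g(x), x − a⟩ ≥ b·|∇g(x)| − c·|x − a| − d. -/
open scoped RealInnerProductSpace

lemma convex_grad_subgrad {m : ℕ} {D : Set (EuclideanSpace ℝ (Fin m))}
    {g : EuclideanSpace ℝ (Fin m) → ℝ} (hg : ConvexOn ℝ D g)
    {x y : EuclideanSpace ℝ (Fin m)} (hx : x ∈ D) (hy : y ∈ D)
    (hd : DifferentiableAt ℝ g x) :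
    g x + ⟪gradient g x, y - x⟫ ≤ g y := by
  set v := y - x with hv
  have hgrad : HasFDerivAt g ((InnerProductSpace.toDual ℝ _) (gradient g x)) x :=
    (hasGradientAt_iff_hasFDerivAt).1 hd.hasGradientAt
  -- φ t = g (x + t • v)
  have hc : HasDerivAt (fun t : ℝ => x + t • v) v 0 := by
    simpa using ((hasDerivAt_id (0:ℝ)).smul_const v).const_add x
  have hφ : HasDerivAt (fun t : ℝ => g (x + t • v)) (⟪gradient g x, v⟫) 0 := by
    have hgrad' : HasFDerivAt g ((InnerProductSpace.toDual ℝ _) (gradient g x)) (x + (0:ℝ) • v) := by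
      simpa using hgrad
    have := hgrad'.comp_hasDerivAt 0 hc
    simpa [Function.comp_def] using this
  -- slope inequality
  have hslope : ∀ t : ℝ, t ∈ Set.Ioc (0:ℝ) 1 →
      (g (x + t • v) - g (x + (0:ℝ) • v)) / (t - 0) ≤ g y - g x := by
    intro t ht
    have hxy : x + t • v = (1 - t) • x + t • y := by
      rw [hv]; module
    have hle : g (x + t • v) ≤ (1 - t) * g x + t * g y := by
      rw [hxy]
      exact hg.2 hx hy (by linarith [ht.2]) ht.1.le (by ring)
    rw [sub_zero, zero_smul, add_zero, div_le_iff₀ ht.1]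
    nlinarith [ht.1]
  have htend : Filter.Tendsto (slope (fun t : ℝ => g (x + t • v)) 0)
      (nhdsWithin 0 (Set.Ioi 0)) (nhds (⟪gradient g x, v⟫)) := by
    refine (hasDerivAt_iff_tendsto_slope.1 hφ).mono_left (nhdsWithin_mono _ ?_)
    intro t ht; exact fun h => (lt_irrefl (0:ℝ)) (h ▸ ht)
  have hle : ⟪gradient g x, v⟫ ≤ g y - g x := by
    refine le_of_tendsto htend ?_
    filter_upwards [Ioc_mem_nhdsGT_of_mem (by norm_num : (0:ℝ) ∈ Set.Ico (0:ℝ) 1)] with t ht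
    rw [slope_def_field]
    simpa using hslope t ht
  linarith

/-- Cépa–Lépingle, (2.1): For a convex `C¹` function `g` on an open
convex set `D ⊆ ℝ^m` and any `a ∈ D`, there are constants `b, c, d > 0` such that
`⟪∇g(x), x - a⟫ ≥ b‖∇g(x)‖ - c‖x - a‖ - d` for all `x ∈ D`. -/
theorem convex_gradient_inequality
    {m : ℕ} (D : Set (EuclideanSpace ℝ (Fin m)))
    (hDopen : IsOpen D) (hDconv : Convex ℝ D)
    (g : EuclideanSpace ℝ (Fin m) → ℝ)
    (hgconv : ConvexOn ℝ D g)
    (hgdiff : ∀ x ∈ D, DifferentiableAt ℝ g x)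
    (a : EuclideanSpace ℝ (Fin m)) (ha : a ∈ D) :
    ∃ b c d : ℝ, 0 < b ∧ 0 < c ∧ 0 < d ∧
      ∀ x ∈ D, b * ‖gradient g x‖ - c * ‖x - a‖ - d ≤ ⟪gradient g x, x - a⟫ := by
  obtain ⟨r, hr, hball⟩ := Metric.isOpen_iff.1 hDopen a ha
  set b : ℝ := r / 2 with hb
  have hbpos : 0 < b := by positivity
  have hcball : Metric.closedBall a b ⊆ D := fun z hz => by
    refine hball (Metric.mem_ball.2 ?_)
    have : dist z a ≤ b := Metric.mem_closedBall.1 hz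
    rw [hb] at this; linarith
  -- continuity of g on D
  have hgcont : ContinuousOn g (Metric.closedBall a b) := fun z hz =>
    ((hgdiff z (hcball hz)).continuousAt).continuousWithinAt
  -- sup of g on closed ball
  obtain ⟨z₀, hz₀, hMz'⟩ := (isCompact_closedBall a b).exists_isMaxOn
    ⟨a, Metric.mem_closedBall_self hbpos.le⟩ hgcont
  set M' := g z₀ with hM'
  have hMz : ∀ z ∈ Metric.closedBall a b, g z ≤ M' := fun z hz => hMz' hz
  have hMa : g a ≤ M' := hMz a (Metric.mem_closedBall_self hbpos.le)
  refine ⟨b, ‖gradient g a‖ + 1, M' - g a + 1, hbpos, by positivity, by linarith, ?_⟩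
  intro x hx
  have hda := hgdiff a ha
  have hdx := hgdiff x hx
  -- lower bound on g x
  have hlow : g a + ⟪gradient g a, x - a⟫ ≤ g x := convex_grad_subgrad hgconv ha hx hda
  have hcs : -(‖gradient g a‖ * ‖x - a‖) ≤ ⟪gradient g a, x - a⟫ := by
    have := abs_real_inner_le_norm (gradient g a) (x - a)
    cases abs_le.1 this with
    | intro h _ => linarith
  by_cases hzero : gradient g x = 0
  · rw [hzero]
    simp only [norm_zero, inner_zero_left, mul_zero, zero_sub]
    have h1 : 0 ≤ ‖x - a‖ := norm_nonneg _
    nlinarith [norm_nonneg (gradient g a)]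
  · set u := gradient g x with hu
    have hun : 0 < ‖u‖ := norm_pos_iff.2 hzero
    set y := a + (b / ‖u‖) • u with hy
    have hyD : y ∈ D := by
      apply hcball
      simp only [Metric.mem_closedBall, hy, dist_eq_norm, add_sub_cancel_left, norm_smul]
      rw [Real.norm_eq_abs, abs_of_nonneg (by positivity : (0:ℝ) ≤ b / ‖u‖)]
      rw [div_mul_cancel₀ _ hun.ne']
    have hkey : g x + ⟪u, y - x⟫ ≤ g y := convex_grad_subgrad hgconv hx hyD hdx
    have hyM : g y ≤ M' := hMz y (by
      simp only [Metric.mem_closedBall, hy, dist_eq_norm, add_sub_cancel_left, norm_smul]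
      rw [Real.norm_eq_abs, abs_of_nonneg (by positivity : (0:ℝ) ≤ b / ‖u‖),
        div_mul_cancel₀ _ hun.ne'])
    have hysplit : ⟪u, y - x⟫ = b * ‖u‖ - ⟪u, x - a⟫ := by
      have : y - x = (b / ‖u‖) • u - (x - a) := by rw [hy]; abel
      rw [this, inner_sub_right, real_inner_smul_right, real_inner_self_eq_norm_sq]
      field_simp
    rw [hysplit] at hkey
    nlinarith [norm_nonneg (x - a)]
end

section
/- Let R be a reduced root system with simple system S, positive system R₊, and α₀ ∈ S, and let k : R → [0,∞) be invariant under the Weyl group action on roots. Then for every x in the open Weyl chamber C, the sum Σ_{α ∈ R₊ \ {α₀}} k(α)·⟨α, α₀⟩/⟨α, x⟩ is less than or equal to 0. -/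
open scoped RealInnerProductSpace

lemma finset_li_coeffs {V : Type*} [AddCommGroup V] [Module ℝ V] (S : Finset V)
    (hSli : LinearIndependent ℝ (fun s : (S : Set V) => (s : V)))
    (g : V → ℝ) (h : ∑ s ∈ S, g s • s = 0) : ∀ s ∈ S, g s = 0 := by
  intro s hs
  have h2 : ∑ i ∈ (Finset.univ : Finset {x // x ∈ S}), g i.1 • i.1 = 0 := by
    rw [← Finset.sum_attach S (fun s => g s • s)] at h
    convert h using 2
    rw [Finset.univ_eq_attach]
  exact linearIndependent_iff'.mp hSli Finset.univ (fun i => g i.1) h2 ⟨s, hs⟩ (Finset.mem_univ _)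


/-- For a Weyl-group–invariant multiplicity function `k ≥ 0` and a
simple root `α₀`, the sum `∑_{α ∈ R₊ \ {α₀}} k(α)⟪α, α₀⟫/⟪α, x⟫` is `≤ 0` for every
`x` in the open Weyl chamber. -/
theorem sum_drift_nonpos
    {V : Type*} [DecidableEq V] [NormedAddCommGroup V] [InnerProductSpace ℝ V] [FiniteDimensional ℝ V]
    (R Rpos S : Finset V)
    (hR0 : ∀ α ∈ R, α ≠ (0 : V))
    (hreduced : ∀ α ∈ R, ∀ β ∈ R, (∃ t : ℝ, β = t • α) → β = α ∨ β = -α)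
    (hrefl : ∀ α ∈ R, ∀ β ∈ R, β - (2 * ⟪α, β⟫ / ‖α‖ ^ 2) • α ∈ R)
    (hRposR : (Rpos : Set V) ⊆ (R : Set V))
    (hS : (S : Set V) ⊆ (Rpos : Set V))
    (hSli : LinearIndependent ℝ (fun s : (S : Set V) => (s : V)))
    (hpos : ∀ α ∈ R, α ∈ Rpos ↔ ∃ c : V → ℝ, (∀ s ∈ S, 0 ≤ c s) ∧ α = ∑ s ∈ S, c s • s)
    (hsplit : ∀ α ∈ R, α ∈ Rpos ∨ -α ∈ Rpos)
    (k : V → ℝ) (hk0 : ∀ α ∈ R, 0 ≤ k α)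
    (hkinv : ∀ α ∈ R, ∀ β ∈ R, k (β - (2 * ⟪α, β⟫ / ‖α‖ ^ 2) • α) = k β)
    (α₀ : V) (hα₀ : α₀ ∈ S)
    (x : V) (hx : ∀ α ∈ Rpos, 0 < ⟪α, x⟫) :
    ∑ α ∈ Rpos.erase α₀, k α * ⟪α, α₀⟫ / ⟪α, x⟫ ≤ 0 := by
  have hα₀pos : α₀ ∈ Rpos := hS hα₀
  have hα₀R : α₀ ∈ R := hRposR hα₀pos
  have hα₀ne : α₀ ≠ 0 := hR0 _ hα₀R
  have hn : (0:ℝ) < ‖α₀‖ ^ 2 := by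
    have := norm_pos_iff.mpr hα₀ne
    positivity
  set σ : V → V := fun β => β - (2 * ⟪α₀, β⟫ / ‖α₀‖ ^ 2) • α₀ with hσ
  have hself : ⟪α₀, α₀⟫ = ‖α₀‖ ^ 2 := real_inner_self_eq_norm_sq α₀
  -- inner product of σ β with anything
  have hinner : ∀ β y : V, ⟪σ β, y⟫ = ⟪β, y⟫ - (2 * ⟪α₀, β⟫ / ‖α₀‖ ^ 2) * ⟪α₀, y⟫ := by
    intro β y
    simp [hσ, inner_sub_left, real_inner_smul_left]
  have hinnerα₀ : ∀ β : V, ⟪σ β, α₀⟫ = -⟪β, α₀⟫ := by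
    intro β
    rw [hinner, hself]
    field_simp
    rw [real_inner_comm]
    ring
  have hσα₀ : σ α₀ = -α₀ := by
    rw [hσ]
    simp only [hself]
    have h2 : 2 * ‖α₀‖ ^ 2 / ‖α₀‖ ^ 2 = 2 := by field_simp
    rw [h2]
    module
  have hinv : ∀ β, σ (σ β) = β := by
    intro β
    have h1 : ⟪α₀, σ β⟫ = -⟪α₀, β⟫ := by
      rw [real_inner_comm, hinnerα₀, real_inner_comm]
    show σ β - (2 * ⟪α₀, σ β⟫ / ‖α₀‖ ^ 2) • α₀ = β
    rw [h1, hσ]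
    simp only
    match_scalars <;> ring
  -- σ maps Rpos.erase α₀ to itself
  have hmem : ∀ α ∈ Rpos.erase α₀, σ α ∈ Rpos.erase α₀ := by
    intro α hα
    obtain ⟨hne, hαpos⟩ := Finset.mem_erase.mp hα
    have hαR : α ∈ R := hRposR hαpos
    have hnegne : α ≠ -α₀ := by
      intro h
      have h1 := hx α hαpos
      have h2 := hx α₀ hα₀pos
      rw [h, inner_neg_left] at h1
      linarith
    have hσR : σ α ∈ R := hrefl α₀ hα₀R α hαR
    have hσne : σ α ≠ α₀ := by
      intro h
      apply hnegne
      have : σ (σ α) = σ α₀ := by rw [h]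
      rw [hinv, hσα₀] at this
      exact this
    refine Finset.mem_erase.mpr ⟨hσne, ?_⟩
    by_contra hcon
    have hnegpos : -σ α ∈ Rpos := (hsplit _ hσR).resolve_left hcon
    obtain ⟨c, hc0, hcα⟩ := (hpos α hαR).mp hαpos
    obtain ⟨d, hd0, hdα⟩ := (hpos _ (hRposR hnegpos)).mp hnegpos
    set t : ℝ := 2 * ⟪α₀, α⟫ / ‖α₀‖ ^ 2 with ht
    have hgsum : ∑ s ∈ S, (fun s => c s + d s - (if s = α₀ then t else 0)) s • s = 0 := by
      simp only [sub_smul, add_smul, ite_smul, zero_smul]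
      rw [Finset.sum_sub_distrib, Finset.sum_add_distrib, Finset.sum_ite_eq' S α₀ (fun s => t • s),
        if_pos hα₀, ← hcα, ← hdα]
      have : -σ α = -(α - t • α₀) := by rw [hσ]
      rw [this]
      abel
    have hg := finset_li_coeffs S hSli _ hgsum
    have hczero : ∀ s ∈ S, s ≠ α₀ → c s = 0 := by
      intro s hs hsne
      have := hg s hs
      simp only [if_neg hsne, sub_zero] at this
      have := hc0 s hs
      have := hd0 s hs
      linarith
    have hαmul : α = c α₀ • α₀ := by
      rw [hcα, Finset.sum_eq_single α₀]
      · intro s hs hsne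
        rw [hczero s hs hsne, zero_smul]
      · intro h; exact absurd hα₀ h
    rcases hreduced α₀ hα₀R α hαR ⟨c α₀, hαmul⟩ with h | h
    · exact hne h
    · exact hnegne h
  -- reindex the sum by σ
  set f : V → ℝ := fun α => k α * ⟪α, α₀⟫ / ⟪α, x⟫ with hf
  have hre : ∑ α ∈ Rpos.erase α₀, f α = ∑ α ∈ Rpos.erase α₀, f (σ α) :=
    (Finset.sum_nbij' σ σ hmem hmem (fun a _ => hinv a) (fun a _ => hinv a)
      (fun a ha => rfl)).symm
  have hterm : ∀ α ∈ Rpos.erase α₀, f α + f (σ α) ≤ 0 := by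
    intro α hα
    obtain ⟨hne, hαpos⟩ := Finset.mem_erase.mp hα
    have hαR : α ∈ R := hRposR hαpos
    have ha : 0 < ⟪α, x⟫ := hx α hαpos
    have hb : 0 < ⟪σ α, x⟫ := hx _ (Finset.mem_erase.mp (hmem α hα)).2
    have hk : 0 ≤ k α := hk0 α hαR
    have hkσ : k (σ α) = k α := hkinv α₀ hα₀R α hαR
    have hq : 0 < ⟪α₀, x⟫ := hx α₀ hα₀pos
    set p : ℝ := ⟪α, α₀⟫ with hp
    have hbeq : ⟪σ α, x⟫ = ⟪α, x⟫ - (2 * p / ‖α₀‖ ^ 2) * ⟪α₀, x⟫ := by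
      rw [hinner, show (inner ℝ α₀ α : ℝ) = p from by rw [hp, real_inner_comm]]
    have hfσ : f (σ α) = k α * (-p) / ⟪σ α, x⟫ := by
      rw [hf]
      simp only
      rw [hkσ, hinnerα₀]
    have hid : f α + f (σ α) =
        (k α * p * (⟪σ α, x⟫ - ⟪α, x⟫)) / (⟪α, x⟫ * ⟪σ α, x⟫) := by
      rw [hfσ, hf]
      simp only
      field_simp
      ring
    rw [hid]
    apply div_nonpos_of_nonpos_of_nonneg
    · have : ⟪σ α, x⟫ - ⟪α, x⟫ = -(2 * p / ‖α₀‖ ^ 2 * ⟪α₀, x⟫) := by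
        rw [hbeq]; ring
      rw [this]
      have h1 : 0 ≤ 2 * k α * p ^ 2 * ⟪α₀, x⟫ / ‖α₀‖ ^ 2 := by
        apply div_nonneg _ hn.le
        nlinarith [mul_nonneg (mul_nonneg hk (sq_nonneg p)) hq.le]
      have heq : k α * p * -(2 * p / ‖α₀‖ ^ 2 * ⟪α₀, x⟫)
          = -(2 * k α * p ^ 2 * ⟪α₀, x⟫ / ‖α₀‖ ^ 2) := by ring
      rw [heq]
      linarith [h1]
    · exact (mul_pos ha hb).le
  have h2 : 2 * ∑ α ∈ Rpos.erase α₀, f α ≤ 0 := by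
    have : 2 * ∑ α ∈ Rpos.erase α₀, f α
        = ∑ α ∈ Rpos.erase α₀, (f α + f (σ α)) := by
      rw [Finset.sum_add_distrib, ← hre]; ring
    rw [this]
    exact Finset.sum_nonpos hterm
  have : ∑ α ∈ Rpos.erase α₀, f α ≤ 0 := by linarith
  exact this
end

section
/- Let R be a reduced root system, S a simple system, α₀ ∈ S, σ₀ = σ_{α₀}, and let P = {α ∈ R₊ \ {α₀} : ⟨α, α₀⟩ > 0}. Then for any function k : R → ℝ with k(σ₀(α)) = k(α) and any x in the open Weyl chamber C: Σ_{α ∈ R₊ \ {α₀}} k(α)⟨α,α₀⟩/⟨α,x⟩ = −Σ_{α ∈ P} k(α)·⟨α,α₀⟩·⟨α − σ₀(α), x⟩ / (⟨α,x⟩·⟨σ₀(α),x⟩). -/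
open scoped RealInnerProductSpace

/-- Pairing each positive root `α ≠ α₀` with `⟪α, α₀⟫ > 0` with its
reflection `σ₀(α)`, the drift sum rewrites as
`∑_{α ∈ R₊\{α₀}} k(α)⟪α,α₀⟫/⟪α,x⟫
  = -∑_{α ∈ P} k(α)⟪α,α₀⟫⟪α - σ₀(α), x⟫/(⟪α,x⟫⟪σ₀(α),x⟫)`. -/
theorem sum_drift_pairing
    {V : Type*} [DecidableEq V] [NormedAddCommGroup V] [InnerProductSpace ℝ V] [FiniteDimensional ℝ V]
    (R Rpos S : Finset V)
    (hR0 : ∀ α ∈ R, α ≠ (0 : V))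
    (hreduced : ∀ α ∈ R, ∀ β ∈ R, (∃ t : ℝ, β = t • α) → β = α ∨ β = -α)
    (hrefl : ∀ α ∈ R, ∀ β ∈ R, β - (2 * ⟪α, β⟫ / ‖α‖ ^ 2) • α ∈ R)
    (hRposR : (Rpos : Set V) ⊆ (R : Set V))
    (hS : (S : Set V) ⊆ (Rpos : Set V))
    (hSli : LinearIndependent ℝ (fun s : (S : Set V) => (s : V)))
    (hpos : ∀ α ∈ R, α ∈ Rpos ↔ ∃ c : V → ℝ, (∀ s ∈ S, 0 ≤ c s) ∧ α = ∑ s ∈ S, c s • s)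
    (hsplit : ∀ α ∈ R, α ∈ Rpos ∨ -α ∈ Rpos)
    (α₀ : V) (hα₀ : α₀ ∈ S)
    (k : V → ℝ)
    (hkinv : ∀ α ∈ R, k (α - (2 * ⟪α₀, α⟫ / ‖α₀‖ ^ 2) • α₀) = k α)
    (P : Finset V) (hP : ∀ α, α ∈ P ↔ α ∈ Rpos.erase α₀ ∧ 0 < ⟪α, α₀⟫)
    (x : V) (hx : ∀ α ∈ Rpos, 0 < ⟪α, x⟫) :
    ∑ α ∈ Rpos.erase α₀, k α * ⟪α, α₀⟫ / ⟪α, x⟫ =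
      -∑ α ∈ P, k α * ⟪α, α₀⟫ *
          ⟪α - (α - (2 * ⟪α₀, α⟫ / ‖α₀‖ ^ 2) • α₀), x⟫ /
          (⟪α, x⟫ * ⟪α - (2 * ⟪α₀, α⟫ / ‖α₀‖ ^ 2) • α₀, x⟫) := by
  classical
  set σ : V → V := fun α => α - (2 * ⟪α₀, α⟫ / ‖α₀‖ ^ 2) • α₀ with hσdef
  have hα₀pos : α₀ ∈ Rpos := hS hα₀
  have hα₀R : α₀ ∈ R := hRposR hα₀pos
  have hn0 : ‖α₀‖ ≠ 0 := norm_ne_zero_iff.mpr (hR0 α₀ hα₀R)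
  have hn2 : (‖α₀‖ : ℝ) ^ 2 ≠ 0 := pow_ne_zero 2 hn0
  have hself : ⟪α₀, α₀⟫ = ‖α₀‖ ^ 2 := real_inner_self_eq_norm_sq α₀
  have hα₀x : 0 < ⟪α₀, x⟫ := hx α₀ hα₀pos
  have hinner : ∀ α : V, ⟪σ α, α₀⟫ = -⟪α, α₀⟫ := by
    intro α
    simp only [hσdef, inner_sub_left, real_inner_smul_left, hself, real_inner_comm α₀ α]
    field_simp
    ring
  have hinnerx : ∀ α : V, ⟪σ α, x⟫ = ⟪α, x⟫ - (2 * ⟪α₀, α⟫ / ‖α₀‖ ^ 2) * ⟪α₀, x⟫ := by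
    intro α
    simp [hσdef, inner_sub_left, real_inner_smul_left]
  have hσσ : ∀ α : V, σ (σ α) = α := by
    intro α
    have h1 : ⟪α₀, σ α⟫ = -⟪α₀, α⟫ := by
      rw [real_inner_comm, hinner, real_inner_comm]
    simp only [hσdef] at h1 ⊢
    rw [h1]
    have : 2 * -⟪α₀, α⟫ / ‖α₀‖ ^ 2 = -(2 * ⟪α₀, α⟫ / ‖α₀‖ ^ 2) := by ring
    rw [this, neg_smul]
    abel
  have hσα₀ : σ α₀ = -α₀ := by
    simp only [hσdef, hself]
    rw [show 2 * ‖α₀‖ ^ 2 / ‖α₀‖ ^ 2 = 2 by field_simp]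
    rw [two_smul]; abel
  have hσR : ∀ α ∈ R, σ α ∈ R := fun α hα => hrefl α₀ hα₀R α hα
  have hli : ∀ g : V → ℝ, ∑ s ∈ S, g s • s = 0 → ∀ s ∈ S, g s = 0 := by
    intro g hg s hs
    have hsum : ∑ i : (S : Set V), g i • (i : V) = 0 := by
      rw [Finset.sum_finset_coe (f := fun v => g v • v)]; exact hg
    have := linearIndependent_iff'.mp hSli Finset.univ (fun i => g i) ?_ ⟨s, Finset.mem_coe.mpr hs⟩ (Finset.mem_univ _)
    · exact this
    · exact hsum
  -- key: σ maps Rpos.erase α₀ to itself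
  have hkey : ∀ α ∈ Rpos.erase α₀, σ α ∈ Rpos.erase α₀ := by
    intro α hα
    obtain ⟨hne, hαpos⟩ := Finset.mem_erase.mp hα
    have hαR : α ∈ R := hRposR hαpos
    have hσαR : σ α ∈ R := hσR α hαR
    have hnotneg : α ≠ -α₀ := by
      intro h
      have := hx α hαpos
      rw [h, inner_neg_left] at this
      linarith
    have hσpos : σ α ∈ Rpos := by
      by_contra hcon
      have hneg : -σ α ∈ Rpos := (hsplit (σ α) hσαR).resolve_left hcon
      obtain ⟨c1, hc1nn, hc1⟩ := (hpos α hαR).mp hαpos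
      obtain ⟨c2, hc2nn, hc2⟩ := (hpos (-σ α) (hRposR hneg)).mp hneg
      set t : ℝ := 2 * ⟪α₀, α⟫ / ‖α₀‖ ^ 2 with ht
      have hsum0 : ∑ s ∈ S, (c1 s + c2 s - (if s = α₀ then t else 0)) • s = 0 := by
        have h1 : ∑ s ∈ S, (if s = α₀ then t else 0) • s = t • α₀ := by
          simp only [ite_smul, zero_smul]
          rw [Finset.sum_ite_eq' S α₀ (fun s => t • s)]
          simp [hα₀]
        simp only [sub_smul, add_smul, Finset.sum_sub_distrib, Finset.sum_add_distrib, h1,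
          ← hc1, ← hc2]
        have : α + -σ α = t • α₀ := by simp only [hσdef, ← ht]; abel
        rw [this]; abel
      have hzero := hli _ hsum0
      have hc1z : ∀ s ∈ S, s ≠ α₀ → c1 s = 0 := by
        intro s hs hsne
        have := hzero s hs
        rw [if_neg hsne] at this
        have := hc1nn s hs
        have := hc2nn s hs
        linarith [hzero s hs, hc1nn s hs, hc2nn s hs]
      have hαmul : α = c1 α₀ • α₀ := by
        rw [hc1, Finset.sum_eq_single α₀]
        · intro b hb hbne
          rw [hc1z b hb hbne, zero_smul]
        · intro h; exact absurd hα₀ h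
      have := hreduced α₀ hα₀R α hαR ⟨c1 α₀, hαmul⟩
      rcases this with h | h
      · exact hne h
      · exact hnotneg h
    refine Finset.mem_erase.mpr ⟨?_, hσpos⟩
    intro h
    have : α = σ α₀ := by rw [← h, hσσ]
    rw [hσα₀] at this
    exact hnotneg this
  have hPfilter : P = (Rpos.erase α₀).filter (fun α => 0 < ⟪α, α₀⟫) := by
    ext a
    rw [hP, Finset.mem_filter]
  set E := Rpos.erase α₀ with hE
  set f : V → ℝ := fun α => k α * ⟪α, α₀⟫ / ⟪α, x⟫ with hf
  set N : Finset V := E.filter (fun α => ⟪α, α₀⟫ < 0) with hN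
  have hsplit1 : ∑ α ∈ E, f α = ∑ α ∈ P, f α + ∑ α ∈ E.filter (fun α => ¬ 0 < ⟪α, α₀⟫), f α := by
    rw [hPfilter, Finset.sum_filter_add_sum_filter_not]
  have hsub : ∑ α ∈ E.filter (fun α => ¬ 0 < ⟪α, α₀⟫), f α = ∑ α ∈ N, f α := by
    symm
    apply Finset.sum_subset
    · intro a ha
      rw [hN, Finset.mem_filter] at ha
      rw [Finset.mem_filter]
      exact ⟨ha.1, by linarith [ha.2]⟩
    · intro a ha hna
      rw [Finset.mem_filter] at ha
      rw [hN, Finset.mem_filter] at hna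
      have : ⟪a, α₀⟫ = 0 := by
        rcases lt_trichotomy (⟪a, α₀⟫ : ℝ) 0 with h | h | h
        · exact absurd ⟨ha.1, h⟩ hna
        · exact h
        · exact absurd h ha.2
      simp [hf, this]
  have hNP : ∑ α ∈ N, f α = ∑ α ∈ P, f (σ α) := by
    apply Finset.sum_nbij' (i := σ) (j := σ)
    · intro a ha
      rw [hN, Finset.mem_filter] at ha
      rw [hPfilter, Finset.mem_filter]
      refine ⟨hkey a ha.1, ?_⟩
      rw [hinner]; linarith [ha.2]
    · intro a ha
      rw [hPfilter, Finset.mem_filter] at ha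
      rw [hN, Finset.mem_filter]
      refine ⟨hkey a ha.1, ?_⟩
      rw [hinner]; linarith [ha.2]
    · intro a _; exact hσσ a
    · intro a _; exact hσσ a
    · intro a _; rw [hσσ]
  rw [hsplit1, hsub, hNP, ← Finset.sum_add_distrib, ← Finset.sum_neg_distrib]
  apply Finset.sum_congr rfl
  intro α hαP
  have hαE : α ∈ E := ((hP α).mp hαP).1
  have hαpos : α ∈ Rpos := (Finset.mem_erase.mp hαE).2
  have hαR : α ∈ R := hRposR hαpos
  have hσαE : σ α ∈ E := hkey α hαE
  have hσαpos : σ α ∈ Rpos := (Finset.mem_erase.mp hσαE).2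
  have ha : (0:ℝ) < ⟪α, x⟫ := hx α hαpos
  have hb : (0:ℝ) < ⟪σ α, x⟫ := hx (σ α) hσαpos
  have hkσ : k (σ α) = k α := hkinv α hαR
  have hiσ : ⟪σ α, α₀⟫ = -⟪α, α₀⟫ := hinner α
  have hsubx : ⟪α - σ α, x⟫ = ⟪α, x⟫ - ⟪σ α, x⟫ := inner_sub_left α (σ α) x
  show f α + f (σ α) = -(k α * ⟪α, α₀⟫ * ⟪α - σ α, x⟫ / (⟪α, x⟫ * ⟪σ α, x⟫))
  rw [hf]
  simp only [hkσ, hiσ, hsubx]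
  field_simp
  ring
end

section
/- Let α₀ be a simple root and suppose x ∈ C̄ lies in exactly one wall, i.e., ⟨α₀, x⟩ = 0 and ⟨α, x⟩ > 0 for all α ∈ S \ {α₀}. If n is a unit vector with ⟨x − a, n⟩ ≤ 0 for all a ∈ C̄ (unit inward normal at x), then n = α₀/|α₀|. -/
open scoped RealInnerProductSpace

/-- If `x ∈ C̄` lies in exactly one wall `H_{α₀}` (i.e. `⟪α₀, x⟫ = 0` and
`⟪α, x⟫ > 0` for all other simple roots `α`) and `n` is a unit inward normal vector to
the Weyl chamber at `x`, then `n = α₀/‖α₀‖`. -/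
theorem unit_inward_normal_eq_simple_root
    {V : Type*} [NormedAddCommGroup V] [InnerProductSpace ℝ V] [FiniteDimensional ℝ V]
    (S : Finset V)
    (hSli : LinearIndependent ℝ (fun s : (S : Set V) => (s : V)))
    (hSspan : Submodule.span ℝ (S : Set V) = ⊤)
    (hCne : {y : V | ∀ α ∈ S, 0 < ⟪α, y⟫}.Nonempty)
    (α₀ : V) (hα₀ : α₀ ∈ S)
    (x : V) (hx : ∀ α ∈ S, 0 ≤ ⟪α, x⟫)
    (hxα₀ : ⟪α₀, x⟫ = 0)
    (hxwall : ∀ α ∈ S, α ≠ α₀ → 0 < ⟪α, x⟫)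
    (n : V) (hn1 : ‖n‖ = 1)
    (hn : ∀ a : V, (∀ α ∈ S, 0 ≤ ⟪α, a⟫) → ⟪x - a, n⟫ ≤ 0) :
    n = ‖α₀‖⁻¹ • α₀ := by
  classical
  have hspan' : ⊤ ≤ Submodule.span ℝ (Set.range (fun s : (S : Set V) => (s : V))) := by
    rw [Subtype.range_coe, hSspan]
  set B : Module.Basis (S : Set V) ℝ V := Module.Basis.mk hSli hspan' with hBdef
  have hB : ∀ i : (S : Set V), B i = (i : V) := fun i => Module.Basis.mk_apply _ _ i
  set β := fun γ : (S : Set V) =>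
    (InnerProductSpace.toDual ℝ V).symm ((B.coord γ).toContinuousLinearMap) with hβdef
  have hβ : ∀ (γ : (S : Set V)) (w : V), ⟪β γ, w⟫ = B.repr w γ := by
    intro γ w
    have := InnerProductSpace.toDual_apply_apply (𝕜 := ℝ) (x := β γ) (y := w)
    rw [← this, hβdef]
    simp [Module.Basis.coord_apply]
  have hαβ : ∀ (γ : (S : Set V)) (i : (S : Set V)),
      ⟪(i : V), β γ⟫ = if γ = i then 1 else 0 := by
    intro γ i
    rw [real_inner_comm, hβ, ← hB i, Module.Basis.repr_self]
    simp only [Finsupp.single_apply]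
    by_cases h : γ = i
    · simp [h]
    · simp [h, Ne.symm h]
  -- coords of n vanish off α₀
  set i₀ : (S : Set V) := ⟨α₀, hα₀⟩ with hi₀
  have hmem : ∀ (γ : (S : Set V)) (t : ℝ), 0 ≤ ⟪(γ : V), x⟫ + t →
      (∀ α ∈ S, 0 ≤ ⟪α, x + t • β γ⟫) := by
    intro γ t ht α hα
    have : ⟪α, x + t • β γ⟫ = ⟪α, x⟫ + t * ⟪α, β γ⟫ := by
      rw [inner_add_right, inner_smul_right]
    rw [this, hαβ γ ⟨α, hα⟩]
    by_cases h : γ = (⟨α, hα⟩ : (S : Set V))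
    · rw [if_pos h, mul_one]
      have hγα : (γ : V) = α := by rw [h]
      rwa [hγα] at ht
    · rw [if_neg h, mul_zero, add_zero]
      exact hx α hα
  have hinner : ∀ (γ : (S : Set V)) (t : ℝ), 0 ≤ ⟪(γ : V), x⟫ + t →
      0 ≤ t * B.repr n γ := by
    intro γ t ht
    have h1 := hn (x + t • β γ) (hmem γ t ht)
    have : ⟪x - (x + t • β γ), n⟫ = -(t * ⟪β γ, n⟫) := by
      rw [show x - (x + t • β γ) = -(t • β γ) by abel, inner_neg_left, inner_smul_left]
      norm_num
    rw [this, hβ] at h1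
    linarith
  have hzero : ∀ γ : (S : Set V), γ ≠ i₀ → B.repr n γ = 0 := by
    intro γ hγ
    have hpos : 0 < ⟪(γ : V), x⟫ := by
      apply hxwall _ γ.2
      intro h
      exact hγ (Subtype.ext h)
    have h1 := hinner γ ⟪(γ : V), x⟫ (by linarith)
    have h2 := hinner γ (-⟪(γ : V), x⟫) (by linarith)
    nlinarith
  have hpos0 : 0 ≤ B.repr n i₀ := by
    have := hinner i₀ 1 (by simp [hi₀]; rw [hxα₀]; norm_num)
    linarith
  -- n = c • α₀
  have hrepr : n = B.repr n i₀ • α₀ := by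
    conv_lhs => rw [← B.sum_repr n]
    rw [Finset.sum_eq_single i₀]
    · rw [hB]
    · intro b _ hb
      rw [hzero b hb, zero_smul]
    · intro h; exact absurd (Finset.mem_univ i₀) h
  set c := B.repr n i₀ with hc
  have hnorm : c * ‖α₀‖ = 1 := by
    have : ‖n‖ = |c| * ‖α₀‖ := by rw [hrepr, norm_smul, Real.norm_eq_abs]
    rw [hn1, abs_of_nonneg hpos0] at this
    linarith
  have hα₀pos : 0 < ‖α₀‖ := by
    by_contra h
    push_neg at h
    have : ‖α₀‖ = 0 := le_antisymm h (norm_nonneg _)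
    rw [this, mul_zero] at hnorm
    norm_num at hnorm
  have : c = ‖α₀‖⁻¹ := by field_simp at hnorm ⊢; linarith
  rw [hrepr, this]
end
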